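/- Let a and b be positive integers with a ≥ 2. Then there exist infinitely many positive integers N such that a^N − b is composite (i.e., not prime). -/

import Mathlib

theorem stmt_0 (a b : ℕ) (ha : 2 ≤ a) (hb : 1 ≤ b) :
    {N : ℕ | 0 < N ∧ ¬ Nat.Prime (a ^ N - b)}.Infinite := by
  by_contra hfin
  rw [Set.not_infinite] at hfin
  obtain ⟨M, hM⟩ := hfin.bddAbove
  -- every N > M with N > 0 gives a prime
  have key : ∀ N, M < N → Nat.Prime (a ^ N - b) := by
    intro N hN
    by_contra hnp
    have : N ∈ {N : ℕ | 0 < N ∧ ¬ Nat.Prime (a ^ N - b)} := ⟨by omega, hnp⟩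
    exact absurd (hM this) (by omega)
  set N0 := M + b + 1 with hN0
  have hbig : 2 * b < a ^ N0 := by
    calc 2 * b < 2 * 2 ^ b := by have := @Nat.lt_two_pow_self b; omega
    _ = 2 ^ (b + 1) := by ring
    _ ≤ 2 ^ N0 := Nat.pow_le_pow_right (by norm_num) (by omega)
    _ ≤ a ^ N0 := Nat.pow_le_pow_left ha _
  set p := a ^ N0 - b with hp
  have hple : b ≤ a ^ N0 := by omega
  have hpeq : a ^ N0 = p + b := by omega
  have hpprime : Nat.Prime p := key N0 (by omega)
  have hpb : b < p := by omega
  have hpa : ¬ (p ∣ a) := by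
    intro hdvd
    have h1 : p ∣ a ^ N0 := dvd_pow hdvd (by omega)
    have h2 : p ∣ b := by
      have h3 := Nat.dvd_sub h1 (dvd_refl p)
      rwa [hpeq, Nat.add_sub_cancel_left] at h3
    exact absurd (Nat.le_of_dvd (by omega) h2) (by omega)
  set N := N0 + (p - 1) with hN
  have hp2 : 2 ≤ p := hpprime.two_le
  -- Fermat
  have fermat : a ^ (p - 1) ≡ 1 [MOD p] := by
    have : (a : ZMod p) ^ (p - 1) = 1 := by
      haveI := Fact.mk hpprime
      apply ZMod.pow_card_sub_one_eq_one
      simpa [Ne, ZMod.natCast_eq_zero_iff] using hpa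
    have := (ZMod.natCast_eq_natCast_iff (a ^ (p - 1)) 1 p).mp (by push_cast [this]; ring)
    exact this
  have hmod : a ^ N ≡ b [MOD p] := by
    calc a ^ N = a ^ N0 * a ^ (p - 1) := by rw [pow_add]
    _ ≡ a ^ N0 * 1 [MOD p] := Nat.ModEq.mul_left _ fermat
    _ = p + b := by rw [mul_one, hpeq]
    _ ≡ 0 + b [MOD p] := Nat.ModEq.add_right b (Nat.modEq_zero_iff_dvd.mpr dvd_rfl)
    _ = b := by ring
  have hNle : a ^ N0 < a ^ N := by
    have : a ^ N = a ^ N0 * a ^ (p - 1) := by rw [pow_add]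
    have h2 : 2 ≤ a ^ (p - 1) :=
      le_trans ha (Nat.le_self_pow (by omega) a)
    nlinarith [Nat.one_le_two_pow.trans (Nat.pow_le_pow_left ha N0)]
  have hble : b ≤ a ^ N := by omega
  have hdvd : p ∣ a ^ N - b := (Nat.modEq_iff_dvd' hble).mp hmod.symm
  have hNprime : Nat.Prime (a ^ N - b) := key N (by omega)
  rcases hNprime.eq_one_or_self_of_dvd p hdvd with h | h
  · omega
  · omega
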